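/- arXiv:1502.04269 — 3 statements merged into one kernel-verified Lean document; each statement's English description precedes it below -/
import Mathlib

section
/- Let ρ ∈ ℝ^P be nonzero with minimum margin γ_min = min_i |ρᵀx_i|/‖ρ‖₂ > 0 over training examples (x_i, y_i), i = 1,…,N, and let X_max = max_i ‖x_i‖₂. If Λ > X_max·√P / (2·γ_min), then there exists an integer vector λ ∈ {-Λ,…,Λ}^P such that for every i, sign(λᵀx_i) = sign(ρᵀx_i); in particular the 0–1 loss of λ is at most that of ρ: Σ_i 1[y_i λᵀx_i ≤ 0] ≤ Σ_i 1[y_i ρᵀx_i ≤ 0]. -/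
/-- **Minimum Margin Resolution Bound.** If the resolution parameter `Λ` exceeds
`X_max √P / (2 γ_min)`, then there is an integer coefficient vector
`λ ∈ {-Λ,…,Λ}^P` that classifies every training example the same way as `ρ`,
and hence whose 0–1 loss is at most that of `ρ`. -/
theorem min_margin_resolution_bound (P N : ℕ)
    (hne : (Finset.univ : Finset (Fin N)).Nonempty)
    (x : Fin N → EuclideanSpace ℝ (Fin P)) (y : Fin N → ℝ)
    (hy : ∀ i, y i = 1 ∨ y i = -1)
    (ρ : EuclideanSpace ℝ (Fin P)) (hρ : ρ ≠ 0)
    (γmin Xmax : ℝ)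
    (hγ : γmin = Finset.univ.inf' hne (fun i => |∑ j, ρ j * x i j| / ‖ρ‖))
    (hγpos : 0 < γmin)
    (hX : Xmax = Finset.univ.sup' hne (fun i => ‖x i‖))
    (Λ : ℤ) (hΛ : (Λ : ℝ) > Xmax * Real.sqrt P / (2 * γmin)) :
    ∃ lam : Fin P → ℤ, (∀ j, |lam j| ≤ Λ) ∧
      (∀ i, Real.sign (∑ j, (lam j : ℝ) * x i j) = Real.sign (∑ j, ρ j * x i j)) ∧
      (Finset.univ.filter (fun i => y i * ∑ j, (lam j : ℝ) * x i j ≤ 0)).card ≤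
        (Finset.univ.filter (fun i => y i * ∑ j, ρ j * x i j ≤ 0)).card := by
  have hnρ : 0 < ‖ρ‖ := norm_pos_iff.mpr hρ
  -- Xmax nonneg
  obtain ⟨i0, _⟩ := hne
  have hXnn : 0 ≤ Xmax := by
    rw [hX]
    exact le_trans (norm_nonneg (x i0)) (Finset.le_sup' (fun i => ‖x i‖) (Finset.mem_univ i0))
  have hΛpos : (0:ℝ) < (Λ:ℝ) := lt_of_le_of_lt (by positivity) hΛ
  set c : ℝ := (Λ:ℝ) / ‖ρ‖ with hc
  have hcpos : 0 < c := div_pos hΛpos hnρ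
  set lam : Fin P → ℤ := fun j => round (c * ρ j) with hlam
  -- coordinate bound
  have hcoord : ∀ j, |ρ j| ≤ ‖ρ‖ := by
    intro j
    have := EuclideanSpace.norm_eq ρ
    calc |ρ j| = Real.sqrt (|ρ j|^2) := by rw [Real.sqrt_sq_eq_abs, abs_abs]
    _ ≤ ‖ρ‖ := by
        rw [this]
        apply Real.sqrt_le_sqrt
        rw [← Real.norm_eq_abs]
        exact Finset.single_le_sum (f := fun j => ‖ρ j‖^2) (fun j _ => by positivity)
          (Finset.mem_univ j)
  have hbnd : ∀ j, |lam j| ≤ Λ := by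
    intro j
    have h1 : |c * ρ j| ≤ (Λ:ℝ) := by
      rw [abs_mul, abs_of_pos hcpos, hc, div_mul_eq_mul_div]
      rw [div_le_iff₀ hnρ]
      exact mul_le_mul_of_nonneg_left (hcoord j) (le_of_lt hΛpos)
    have h2 : |(lam j : ℝ)| ≤ |c * ρ j| + 1/2 := by
      have := abs_sub_round (c * ρ j)
      calc |(lam j : ℝ)| ≤ |c * ρ j| + |(lam j : ℝ) - c * ρ j| := by
            have := abs_add_le (c * ρ j) ((lam j : ℝ) - c * ρ j); simpa using this
      _ ≤ |c * ρ j| + 1/2 := by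
            rw [abs_sub_comm]; linarith [abs_sub_round (c * ρ j)]
    have h3 : |(lam j : ℝ)| < (Λ:ℝ) + 1 := by linarith
    rw [← Int.cast_abs] at h3
    exact Int.lt_add_one_iff.mp (by exact_mod_cast h3)
  -- error bound per example
  have herr : ∀ i, |(∑ j, (lam j : ℝ) * x i j) - c * ∑ j, ρ j * x i j| ≤
      Real.sqrt P * ‖x i‖ / 2 := by
    intro i
    have h1 : (∑ j, (lam j : ℝ) * x i j) - c * ∑ j, ρ j * x i j
        = ∑ j, ((lam j : ℝ) - c * ρ j) * x i j := by
      rw [Finset.mul_sum, ← Finset.sum_sub_distrib]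
      congr 1; ext j; ring
    rw [h1]
    calc |∑ j, ((lam j : ℝ) - c * ρ j) * x i j| ≤ ∑ j, |((lam j : ℝ) - c * ρ j) * x i j| :=
          Finset.abs_sum_le_sum_abs _ _
    _ ≤ ∑ j, (1/2) * |x i j| := by
        apply Finset.sum_le_sum
        intro j _
        rw [abs_mul]
        apply mul_le_mul_of_nonneg_right _ (abs_nonneg _)
        rw [abs_sub_comm]
        exact abs_sub_round (c * ρ j)
    _ = (1/2) * ∑ j, |x i j| := by rw [Finset.mul_sum]
    _ ≤ (1/2) * (Real.sqrt P * ‖x i‖) := by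
        apply mul_le_mul_of_nonneg_left _ (by norm_num)
        have hsq : (∑ j, |x i j|)^2 ≤ (P : ℝ) * ∑ j, |x i j|^2 := by
          have := sq_sum_le_card_mul_sum_sq (s := Finset.univ) (f := fun j => |x i j|)
          simpa using this
        have hnorm : ‖x i‖ = Real.sqrt (∑ j, |x i j|^2) := by
          rw [EuclideanSpace.norm_eq]
          simp only [Real.norm_eq_abs]
        calc ∑ j, |x i j| = Real.sqrt ((∑ j, |x i j|)^2) := by
              rw [Real.sqrt_sq (Finset.sum_nonneg fun j _ => abs_nonneg _)]
        _ ≤ Real.sqrt ((P:ℝ) * ∑ j, |x i j|^2) := Real.sqrt_le_sqrt hsq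
        _ = Real.sqrt P * ‖x i‖ := by
              rw [Real.sqrt_mul (Nat.cast_nonneg P), hnorm]
    _ = Real.sqrt P * ‖x i‖ / 2 := by ring
  -- margin lower bound per example
  have hmargin : ∀ i, γmin ≤ |∑ j, ρ j * x i j| / ‖ρ‖ := by
    intro i; rw [hγ]; exact Finset.inf'_le _ (Finset.mem_univ i)
  have hXi : ∀ i, ‖x i‖ ≤ Xmax := by
    intro i; rw [hX]; exact Finset.le_sup' (fun i => ‖x i‖) (Finset.mem_univ i)
  -- key strict inequality
  have hkey : ∀ i, |(∑ j, (lam j : ℝ) * x i j) - c * ∑ j, ρ j * x i j|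
      < c * |∑ j, ρ j * x i j| := by
    intro i
    have h1 : Real.sqrt P * ‖x i‖ / 2 ≤ Xmax * Real.sqrt P / 2 := by
      have := hXi i
      have h := mul_le_mul_of_nonneg_left this (Real.sqrt_nonneg P)
      linarith
    have h2 : Xmax * Real.sqrt P / 2 < (Λ:ℝ) * γmin := by
      have hΛ' : Xmax * Real.sqrt P / (2 * γmin) < (Λ:ℝ) := hΛ
      rw [div_lt_iff₀ (by linarith : (0:ℝ) < 2*γmin)] at hΛ'
      nlinarith
    have h3 : (Λ:ℝ) * γmin ≤ c * |∑ j, ρ j * x i j| := by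
      calc (Λ:ℝ) * γmin ≤ (Λ:ℝ) * (|∑ j, ρ j * x i j| / ‖ρ‖) :=
            mul_le_mul_of_nonneg_left (hmargin i) (le_of_lt hΛpos)
      _ = c * |∑ j, ρ j * x i j| := by rw [hc]; ring
    linarith [herr i]
  -- sign equality
  have hsign : ∀ i, Real.sign (∑ j, (lam j : ℝ) * x i j) = Real.sign (∑ j, ρ j * x i j) := by
    intro i
    set S := ∑ j, ρ j * x i j with hS
    set L := ∑ j, (lam j : ℝ) * x i j with hL
    have hk := hkey i
    rw [← hS, ← hL] at hk
    have hSne : S ≠ 0 := by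
      intro h
      have := hmargin i
      rw [← hS, h] at this
      simp at this
      linarith
    rcases lt_or_gt_of_ne hSne with hneg | hpos
    · have hLneg : L < 0 := by
        rw [abs_of_neg hneg] at hk
        have h2 := (abs_lt.mp hk).2
        nlinarith
      rw [Real.sign_of_neg hLneg, Real.sign_of_neg hneg]
    · have hLpos : 0 < L := by
        rw [abs_of_pos hpos] at hk
        have h2 := (abs_lt.mp hk).1
        nlinarith
      rw [Real.sign_of_pos hLpos, Real.sign_of_pos hpos]
  refine ⟨lam, hbnd, hsign, ?_⟩
  apply Finset.card_le_card
  intro i hi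
  simp only [Finset.mem_filter, Finset.mem_univ, true_and] at hi ⊢
  set S := ∑ j, ρ j * x i j with hS
  set L := ∑ j, (lam j : ℝ) * x i j with hL
  have hk := hkey i
  rw [← hS, ← hL] at hk
  have hSne : S ≠ 0 := by
    intro h
    have := hmargin i
    rw [← hS, h] at this
    simp at this
    linarith
  have hLne : L ≠ 0 := by
    intro h
    rw [h, zero_sub, abs_neg, abs_mul, abs_of_pos hcpos] at hk
    exact absurd hk (lt_irrefl _)
  have hss := hsign i
  rw [← hS, ← hL] at hss
  rcases hy i with h1 | h1 <;> rw [h1] at hi ⊢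
  · simp only [one_mul] at hi ⊢
    have hLneg : L < 0 := lt_of_le_of_ne hi hLne
    have : Real.sign S = -1 := by rw [← hss, Real.sign_of_neg hLneg]
    rcases lt_trichotomy S 0 with h | h | h
    · linarith
    · exact absurd h hSne
    · rw [Real.sign_of_pos h] at this; norm_num at this
  · simp only [neg_mul, one_mul, neg_nonpos] at hi ⊢
    have hLpos : 0 < L := lt_of_le_of_ne (by linarith) (Ne.symm hLne)
    have : Real.sign S = 1 := by rw [← hss, Real.sign_of_pos hLpos]
    rcases lt_trichotomy S 0 with h | h | h
    · rw [Real.sign_of_neg h] at this; norm_num at this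
    · exact absurd h hSne
    · linarith
end

section
/- Under the assumptions of the level-set sufficient-conditions theorem (conditions I–IV with C_ψ > 2ε, ε = L·C_λ), if ‖λ*_01 − λ*_ψ‖ > C_λ then Z_01(λ*_ψ) < Z_01(λ*_01), contradicting that λ*_01 minimizes Z_01; hence ‖λ*_01 − λ*_ψ‖ ≤ C_λ. -/
/-- Under conditions I, III, IV with `C_ψ > 2ε`, if `‖λ*₀₁ − λ*_ψ‖ > C_λ` then
`Z₀₁(λ*_ψ) < Z₀₁(λ*₀₁)`, contradicting optimality of `λ*₀₁`; hence
`‖λ*₀₁ − λ*_ψ‖ ≤ C_λ`. -/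
theorem minimizers_are_close (P : ℕ)
    (Z01 Zpsi : EuclideanSpace ℝ (Fin P) → ℝ)
    (l01 lpsi : EuclideanSpace ℝ (Fin P))
    (h01min : ∀ lam, Z01 l01 ≤ Z01 lam)
    (hpsimin : ∀ lam, Zpsi lpsi ≤ Zpsi lam)
    (L Clam Cpsi ε : ℝ)
    (hL : 0 < L) (hClam : 0 < Clam) (hCpsi : 0 < Cpsi) (hε : 0 < ε)
    (hεdef : ε = L * Clam) (hCpsi2 : Cpsi > 2 * ε)
    -- (I) upper bound on the 0–1 loss
    (hI : ∀ lam, Z01 lam ≤ Zpsi lam)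
    -- (III) curvature near the surrogate minimizer
    (hIII : ∀ lam, ‖lam - lpsi‖ > Clam → Zpsi lam - Zpsi lpsi > Cpsi)
    -- (IV) closeness of the losses at the 0–1 minimizer
    (hIV : |Zpsi l01 - Z01 l01| < ε) :
    (‖l01 - lpsi‖ > Clam → Z01 lpsi < Z01 l01) ∧ ‖l01 - lpsi‖ ≤ Clam := by
  have key : ‖l01 - lpsi‖ > Clam → Z01 lpsi < Z01 l01 := by
    intro h
    have h1 := hIII l01 h
    have h2 := abs_lt.mp hIV
    have h3 := hI lpsi
    linarith [h2.1, h2.2]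
  refine ⟨key, ?_⟩
  by_contra h
  exact absurd (h01min lpsi) (not_le.mpr (key (lt_of_not_ge h)))
end

section
/- Let (x_i, y_i), i = 1,…,N, with x_i ∈ ℝ^{P+1} and y_i ∈ {-1,1}, and let L be a finite set of coefficient vectors. For each i define M_i = max_{λ ∈ L} (γ − y_i λᵀx_i) where γ > 0. Then for any λ ∈ L and ψ_i ∈ {0,1}: the constraint M_i ψ_i ≥ γ − y_i λᵀx_i forces ψ_i = 1 whenever y_i λᵀx_i < γ (in particular whenever y_i λᵀx_i ≤ 0, assuming scores y_iλᵀx_i ∉ (0, γ)); conversely ψ_i = 1 always satisfies the constraint. Hence min over ψ ∈ {0,1}^N subject to these constraints of Σ_i ψ_i equals Σ_i 1[y_i λᵀx_i < γ]. -/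
/-- **Validity of the Big-M encoding of the 0–1 loss.** With
`M_i = max_{λ∈L} (γ − y_i λᵀx_i)` and no achievable score in `(0, γ)`:
the constraint `M_i ψ_i ≥ γ − y_i λᵀx_i` forces `ψ_i = 1` whenever
`y_i λᵀx_i < γ` (in particular whenever `y_i λᵀx_i ≤ 0`), `ψ = 1` is always
feasible, and the minimum of `Σ_i ψ_i` subject to the constraints equals
`#{i : y_i λᵀx_i < γ}`. -/
theorem bigM_zero_one_loss_encoding (P N : ℕ)
    (x : Fin N → Fin (P + 1) → ℝ) (y : Fin N → ℝ) (hy : ∀ i, y i = 1 ∨ y i = -1)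
    (L : Finset (Fin (P + 1) → ℝ)) (hLne : L.Nonempty)
    (γ : ℝ) (hγ : 0 < γ)
    -- no achievable score lies strictly between 0 and γ
    (hgap : ∀ lam ∈ L, ∀ i, ¬ (0 < y i * ∑ j, lam j * x i j ∧ y i * ∑ j, lam j * x i j < γ))
    (M : Fin N → ℝ)
    (hM : ∀ i, M i = L.sup' hLne (fun lam => γ - y i * ∑ j, lam j * x i j))
    (lam : Fin (P + 1) → ℝ) (hlam : lam ∈ L) :
    -- (a) feasibility forces ψ_i = 1 on small-margin (in particular misclassified) examples
    (∀ ψ : Fin N → ℝ, (∀ i, ψ i = 0 ∨ ψ i = 1) →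
      (∀ i, M i * ψ i ≥ γ - y i * ∑ j, lam j * x i j) →
      ∀ i, y i * ∑ j, lam j * x i j < γ → ψ i = 1) ∧
    (∀ ψ : Fin N → ℝ, (∀ i, ψ i = 0 ∨ ψ i = 1) →
      (∀ i, M i * ψ i ≥ γ - y i * ∑ j, lam j * x i j) →
      ∀ i, y i * ∑ j, lam j * x i j ≤ 0 → ψ i = 1) ∧
    -- (b) ψ ≡ 1 always satisfies the constraints
    (∀ i, M i * 1 ≥ γ - y i * ∑ j, lam j * x i j) ∧
    -- (c) the minimum of Σ ψ_i equals the number of examples with score below γ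
    IsLeast {s : ℝ | ∃ ψ : Fin N → ℝ, (∀ i, ψ i = 0 ∨ ψ i = 1) ∧
        (∀ i, M i * ψ i ≥ γ - y i * ∑ j, lam j * x i j) ∧ s = ∑ i, ψ i}
      ((Finset.univ.filter (fun i => y i * ∑ j, lam j * x i j < γ)).card : ℝ) := by
  have hMle : ∀ i, γ - y i * ∑ j, lam j * x i j ≤ M i := by
    intro i
    rw [hM i]
    exact Finset.le_sup' (fun lam => γ - y i * ∑ j, lam j * x i j) hlam
  have ha : ∀ ψ : Fin N → ℝ, (∀ i, ψ i = 0 ∨ ψ i = 1) →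
      (∀ i, M i * ψ i ≥ γ - y i * ∑ j, lam j * x i j) →
      ∀ i, y i * ∑ j, lam j * x i j < γ → ψ i = 1 := by
    intro ψ h01 hfeas i hi
    rcases h01 i with h0 | h1
    · exfalso
      have := hfeas i
      rw [h0, mul_zero] at this
      linarith
    · exact h1
  refine ⟨ha, ?_, ?_, ?_, ?_⟩
  · intro ψ h01 hfeas i hi
    exact ha ψ h01 hfeas i (lt_of_le_of_lt hi hγ)
  · intro i; rw [mul_one]; exact hMle i
  · -- membership: indicator ψ
    refine ⟨fun i => if y i * ∑ j, lam j * x i j < γ then 1 else 0, ?_, ?_, ?_⟩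
    · intro i; by_cases h : y i * ∑ j, lam j * x i j < γ <;> simp [h]
    · intro i
      by_cases h : y i * ∑ j, lam j * x i j < γ
      · simpa [h] using hMle i
      · simp only [h, if_false, mul_zero, ge_iff_le]
        push_neg at h
        linarith
    · simp [Finset.sum_boole]
  · -- lower bound
    rintro s ⟨ψ, h01, hfeas, rfl⟩
    calc ((Finset.univ.filter (fun i => y i * ∑ j, lam j * x i j < γ)).card : ℝ)
        = ∑ i, (if y i * ∑ j, lam j * x i j < γ then (1:ℝ) else 0) := by
          simp [Finset.sum_boole]
      _ ≤ ∑ i, ψ i := by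
          apply Finset.sum_le_sum
          intro i _
          by_cases h : y i * ∑ j, lam j * x i j < γ
          · simp [h, ha ψ h01 hfeas i h]
          · simp only [h, if_false]
            rcases h01 i with h0 | h1
            · simp [h0]
            · simp [h1]
end
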